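/- With P a basis projection (P + ΓPΓ = 1), Q commuting with Γ, ranges 𝔭, 𝔮 in generic position, φ the operator with graph {(Qp, Q^⊥p) : p ∈ 𝔭}, and Δ_𝔭 the operator with graph {(PQp, PQ^⊥p) : p ∈ 𝔭}: (a) φ(Qp) = Δ_𝔭(PQp) − P^⊥Qp for all p ∈ 𝔭; (b) (φ*φ)(QPq) = Δ_𝔭(PQPq) + Γ Δ_𝔭^{-1}(PΓQPq) for all q ∈ 𝔮. -/

import Mathlib

open scoped ComplexInnerProductSpace

/-- Composition of two operators given by their graphs (first apply `G`, then `H`). -/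
def GraphComp {E : Type*} (G H : Set (E × E)) : Set (E × E) :=
  {z : E × E | ∃ w : E, (z.1, w) ∈ G ∧ (w, z.2) ∈ H}

/-- Corollary 4.12 (`Deltap`):
(a) `φ(Qp) = Δ_𝔭(PQp) − P⊥Qp` for all `p ∈ 𝔭`;
(b) `(φ*φ)(QPq) = Δ_𝔭(PQPq) + Γ Δ_𝔭⁻¹(PΓQPq)` for all `q ∈ 𝔮`. -/
theorem phi_and_phi_star_phi_via_modular_operator
    {E : Type*} [NormedAddCommGroup E] [InnerProductSpace ℂ E] [CompleteSpace E]
    (Γ : E → E)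
    (hΓ_add : ∀ x y, Γ (x + y) = Γ x + Γ y)
    (hΓ_smul : ∀ (c : ℂ) (x : E), Γ (c • x) = (starRingEnd ℂ) c • Γ x)
    (hΓ_inner : ∀ f h : E, ⟪Γ f, Γ h⟫ = ⟪h, f⟫)
    (hΓ_inv : ∀ x, Γ (Γ x) = x)
    (P : E →L[ℂ] E) (hP_proj : P ∘L P = P) (hP_sa : IsSelfAdjoint P)
    (hP_basis : ∀ x, P x + Γ (P (Γ x)) = x)
    (Q : E →L[ℂ] E) (hQ_proj : Q ∘L Q = Q) (hQ_sa : IsSelfAdjoint Q)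
    (hQΓ : ∀ x, Q (Γ x) = Γ (Q x))
    (hgen1 : LinearMap.range (P : E →ₗ[ℂ] E) ⊓ LinearMap.range (Q : E →ₗ[ℂ] E) = ⊥)
    (hgen2 : LinearMap.range (P : E →ₗ[ℂ] E) ⊓ (LinearMap.range (Q : E →ₗ[ℂ] E))ᗮ = ⊥)
    (hgen3 : (LinearMap.range (P : E →ₗ[ℂ] E))ᗮ ⊓ LinearMap.range (Q : E →ₗ[ℂ] E) = ⊥)
    (hgen4 : (LinearMap.range (P : E →ₗ[ℂ] E))ᗮ ⊓ (LinearMap.range (Q : E →ₗ[ℂ] E))ᗮ = ⊥)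
    (graφ graφstar graΔ : Set (E × E))
    (hφ : graφ = {z : E × E | ∃ p ∈ LinearMap.range (P : E →ₗ[ℂ] E), z = (Q p, (1 - Q) p)})
    (hφstar : graφstar = {z : E × E | z.1 ∈ (LinearMap.range (Q : E →ₗ[ℂ] E))ᗮ ∧ z.2 ∈ LinearMap.range (Q : E →ₗ[ℂ] E) ∧
      ∀ w ∈ graφ, ⟪w.2, z.1⟫ = ⟪w.1, z.2⟫})
    (hΔ : graΔ = {z : E × E | ∃ p ∈ LinearMap.range (P : E →ₗ[ℂ] E), z = (P (Q p), P ((1 - Q) p))}) :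
    -- (a)  φ(Qp) = Δ_𝔭(PQp) − P⊥Qp
    (∀ p ∈ LinearMap.range (P : E →ₗ[ℂ] E), ∀ y z : E,
      (Q p, y) ∈ graφ → (P (Q p), z) ∈ graΔ → y = z - (1 - P) (Q p)) ∧
    -- (b)  (φ*φ)(QPq) = Δ_𝔭(PQPq) + Γ Δ_𝔭⁻¹(PΓQPq)
    (∀ q ∈ LinearMap.range (Q : E →ₗ[ℂ] E), ∀ y z w : E,
      (Q (P q), y) ∈ GraphComp graφ graφstar →
      (P (Q (P q)), z) ∈ graΔ →
      (w, P (Γ (Q (P q)))) ∈ graΔ →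
      y = z + Γ w) := by
  have hPsym : ∀ x y : E, ⟪P x, y⟫ = ⟪x, P y⟫ :=
    ContinuousLinearMap.isSelfAdjoint_iff_isSymmetric.mp hP_sa
  have hQsym : ∀ x y : E, ⟪Q x, y⟫ = ⟪x, Q y⟫ :=
    ContinuousLinearMap.isSelfAdjoint_iff_isSymmetric.mp hQ_sa
  have hPP : ∀ x, P (P x) = P x := fun x => DFunLike.congr_fun hP_proj x
  have hQQ : ∀ x, Q (Q x) = Q x := fun x => DFunLike.congr_fun hQ_proj x
  have hPfix : ∀ p, p ∈ LinearMap.range (P : E →ₗ[ℂ] E) → P p = p := by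
    rintro _ ⟨x, rfl⟩; exact hPP x
  have hQfix : ∀ q, q ∈ LinearMap.range (Q : E →ₗ[ℂ] E) → Q q = q := by
    rintro _ ⟨x, rfl⟩; exact hQQ x
  have hmemP : ∀ x : E, P x ∈ LinearMap.range (P : E →ₗ[ℂ] E) := fun x => ⟨x, rfl⟩
  have hmemQ : ∀ x : E, Q x ∈ LinearMap.range (Q : E →ₗ[ℂ] E) := fun x => ⟨x, rfl⟩
  have horthP : ∀ v : E, P v = 0 → v ∈ (LinearMap.range (P : E →ₗ[ℂ] E))ᗮ := by
    intro v hv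
    rw [Submodule.mem_orthogonal]
    rintro _ ⟨x, rfl⟩
    show ⟪P x, v⟫ = 0
    rw [hPsym, hv, inner_zero_right]
  have horthQ : ∀ v : E, Q v = 0 → v ∈ (LinearMap.range (Q : E →ₗ[ℂ] E))ᗮ := by
    intro v hv
    rw [Submodule.mem_orthogonal]
    rintro _ ⟨x, rfl⟩
    show ⟪Q x, v⟫ = 0
    rw [hQsym, hv, inner_zero_right]
  -- injectivity of Q on range P
  have injQ : ∀ p ∈ LinearMap.range (P : E →ₗ[ℂ] E), Q p = 0 → p = 0 := by
    intro p hp h0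
    have : p ∈ (⊥ : Submodule ℂ E) := hgen2 ▸ Submodule.mem_inf.mpr ⟨hp, horthQ p h0⟩
    simpa using this
  -- injectivity of PQ on range P
  have injPQ : ∀ p ∈ LinearMap.range (P : E →ₗ[ℂ] E), P (Q p) = 0 → p = 0 := by
    intro p hp h0
    have hq : Q p ∈ (⊥ : Submodule ℂ E) :=
      hgen3 ▸ Submodule.mem_inf.mpr ⟨horthP _ h0, hmemQ p⟩
    exact injQ p hp (by simpa using hq)
  -- injectivity of P(1-Q) on range P
  have injP1Q : ∀ p ∈ LinearMap.range (P : E →ₗ[ℂ] E), P (p - Q p) = 0 → p = 0 := by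
    intro p hp h0
    have hQ0 : Q (p - Q p) = 0 := by rw [map_sub, hQQ, sub_self]
    have h1 : p - Q p ∈ (⊥ : Submodule ℂ E) :=
      hgen4 ▸ Submodule.mem_inf.mpr ⟨horthP _ h0, horthQ _ hQ0⟩
    have h2 : p = Q p := by
      have := (Submodule.mem_bot ℂ).mp h1; exact sub_eq_zero.mp this
    have : p ∈ (⊥ : Submodule ℂ E) :=
      hgen1 ▸ Submodule.mem_inf.mpr ⟨hp, ⟨p, h2.symm⟩⟩
    simpa using this
  -- uniqueness in range Q
  have uniqQ : ∀ v ∈ LinearMap.range (Q : E →ₗ[ℂ] E),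
      (∀ p' ∈ LinearMap.range (P : E →ₗ[ℂ] E), ⟪Q p', v⟫ = 0) → v = 0 := by
    intro v hv h
    have hvP : v ∈ (LinearMap.range (P : E →ₗ[ℂ] E))ᗮ := by
      rw [Submodule.mem_orthogonal]
      rintro _ ⟨x, rfl⟩
      have h1 := h (P x) (hmemP x)
      rw [hQsym, hQfix v hv] at h1
      exact h1
    have : v ∈ (⊥ : Submodule ℂ E) := hgen3 ▸ Submodule.mem_inf.mpr ⟨hvP, hv⟩
    simpa using this
  -- Γ lemmas
  have hΓP : ∀ v, Γ (P v) = Γ v - P (Γ v) := by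
    intro v
    have h1 := hP_basis (Γ v)
    rw [hΓ_inv] at h1
    exact eq_sub_of_add_eq' h1
  constructor
  · -- part (a)
    intro p hp y z hy hz
    rw [hφ] at hy
    obtain ⟨p1, hp1, heq1⟩ := hy
    rw [Prod.mk.injEq] at heq1
    obtain ⟨hq1, hy1⟩ := heq1
    have hp1p : p1 = p := by
      have : Q (p1 - p) = 0 := by rw [map_sub, hq1, sub_self]
      have h0 := injQ (p1 - p) (Submodule.sub_mem _ hp1 hp) this
      exact sub_eq_zero.mp h0
    subst hp1p
    rw [hΔ] at hz
    obtain ⟨p2, hp2, heq2⟩ := hz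
    rw [Prod.mk.injEq] at heq2
    obtain ⟨hq2, hz2⟩ := heq2
    have hp2p : p2 = p1 := by
      have : P (Q (p2 - p1)) = 0 := by rw [map_sub, map_sub, hq2, sub_self]
      have h0 := injPQ (p2 - p1) (Submodule.sub_mem _ hp2 hp1) this
      exact sub_eq_zero.mp h0
    subst hp2p
    rw [hy1, hz2]
    simp only [ContinuousLinearMap.sub_apply, ContinuousLinearMap.one_apply, map_sub,
      hPfix p2 hp2]
    abel
  · -- part (b)
    intro q hq y z w hy hz hw
    obtain ⟨w0, hw0φ, hw0star⟩ := hy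
    -- identify w0
    rw [hφ] at hw0φ
    obtain ⟨p1, hp1, heq1⟩ := hw0φ
    rw [Prod.mk.injEq] at heq1
    obtain ⟨hq1, hw01⟩ := heq1
    have hp1Pq : p1 = P q := by
      have : Q (p1 - P q) = 0 := by rw [map_sub, ← hq1, sub_self]
      exact sub_eq_zero.mp (injQ _ (Submodule.sub_mem _ hp1 (hmemP q)) this)
    subst hp1Pq
    have hw0 : w0 = P q - Q (P q) := by
      rw [hw01]; simp [ContinuousLinearMap.sub_apply]
    -- identify z
    rw [hΔ] at hz
    obtain ⟨p2, hp2, heq2⟩ := hz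
    rw [Prod.mk.injEq] at heq2
    obtain ⟨hq2, hz2⟩ := heq2
    have hp2Pq : p2 = P q := by
      have : P (Q (p2 - P q)) = 0 := by rw [map_sub, map_sub, ← hq2, sub_self]
      exact sub_eq_zero.mp (injPQ _ (Submodule.sub_mem _ hp2 (hmemP q)) this)
    subst hp2Pq
    have hz' : z = P (P q - Q (P q)) := by
      rw [hz2]; simp [ContinuousLinearMap.sub_apply]
    -- identify w ; set r = Γ q
    set r : E := Γ q with hr
    have hQr : Q r = r := by rw [hr, hQΓ, hQfix q hq]
    have hΓq2 : Γ r = q := hΓ_inv q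
    have hΓPq : Γ (P q) = r - P r := hΓP q
    rw [hΔ] at hw
    obtain ⟨p3, hp3, heq3⟩ := hw
    rw [Prod.mk.injEq] at heq3
    obtain ⟨hw3, hq3⟩ := heq3
    -- P Γ Q P q = P ((1-Q)(P r))
    have key : P (Γ (Q (P q))) = P (P r) - P (Q (P r)) := by
      rw [← hQΓ, hΓPq]
      simp [map_sub, hQr, hPP]
    have hp3Pr : p3 = P r := by
      have h5 : P p3 - P (Q p3) = P (P r) - P (Q (P r)) := by
        have h4 := hq3.symm.trans key
        simpa [map_sub, ContinuousLinearMap.sub_apply, ContinuousLinearMap.one_apply]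
          using h4
      have h6 : P ((p3 - P r) - Q (p3 - P r)) = 0 := by
        simp only [map_sub]
        rw [sub_sub_sub_comm, h5, sub_self]
      exact sub_eq_zero.mp
        (injP1Q _ (Submodule.sub_mem _ hp3 (hmemP r)) h6)
    subst hp3Pr
    have hw' : w = P (Q (P r)) := hw3
    -- compute Γ w
    have hΓQPr : Γ (Q (P r)) = q - Q (P q) := by
      rw [← hQΓ, hΓP r, hΓq2, map_sub, hQfix q hq]
    have hΓw : Γ w = q - Q (P q) - P (q - Q (P q)) := by
      rw [hw', hΓP, hΓQPr]
    -- the candidate value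
    have hcand : z + Γ w = q - Q (P q) := by
      rw [hz', hΓw]
      simp only [map_sub, hPP]
      abel
    -- y ∈ range Q and the defining property
    rw [hφstar] at hw0star
    obtain ⟨hw0orth, hyQ, hyc⟩ := hw0star
    -- show y = q - Q (P q)
    have hvmemQ : q - Q (P q) ∈ LinearMap.range (Q : E →ₗ[ℂ] E) := by
      refine ⟨q - P q, ?_⟩
      show Q (q - P q) = q - Q (P q)
      rw [map_sub, hQfix q hq]
    have hdiff : y - (q - Q (P q)) = 0 := by
      apply uniqQ _ (Submodule.sub_mem _ hyQ hvmemQ)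
      intro p' hp'
      have hmemφ : (Q p', (1 - Q) p') ∈ graφ := by
        rw [hφ]; exact ⟨p', hp', rfl⟩
      have h7 := hyc _ hmemφ
      -- h7 : ⟪(1-Q) p', w0⟫ = ⟪Q p', y⟫
      simp only [ContinuousLinearMap.sub_apply, ContinuousLinearMap.one_apply] at h7
      rw [inner_sub_right, h7.symm, hw0]
      -- goal: ⟪p' - Q p', P q - Q (P q)⟫ - ⟪Q p', q - Q (P q)⟫ = 0
      rw [inner_sub_left, inner_sub_right, inner_sub_right, inner_sub_right]
      have e1 : ⟪Q p', Q (P q)⟫ = ⟪p', Q (P q)⟫ := by rw [hQsym, hQQ]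
      have e2 : ⟪Q p', q⟫ = ⟪p', q⟫ := by rw [hQsym, hQfix q hq]
      have e3 : ⟪p', q⟫ = ⟪p', P q⟫ := by
        rw [← hPsym, hPfix p' hp']
      have e4 : ⟪Q p', P q⟫ = ⟪p', Q (P q)⟫ := by rw [hQsym]
      rw [e1, e2, e3, e4]
      ring
    have := sub_eq_zero.mp hdiff
    rw [this, hcand]
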